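/- Assume {(a_i,u_i)}_{i=1}^n is superincreasing and a_i u_i ≤ b for all i. For j ∈ I let ℓ_j = {x ∈ ℤⁿ : x_i ∈ {0, u_i} for all i < j, x_j ∈ {0, θ_j − 1}, and x_i = θ_i for all i > j}, and for c ∈ ℝⁿ let Opt(c) = {x ∈ K : ∑_i c_i x_i = max_{y ∈ K} ∑_i c_i y_i}. Let c ∈ ℝⁿ and j ∈ {1,…,n} be such that c_j > 0, c_t > 0 for every t ∈ I_j, and, in case j ∈ I, ℓ_j ∩ Opt(c) = ∅. Then every x ∈ Opt(c) satisfies x_j + ∑_{i ∈ I_j} φ_j(i)(x_i − θ_i) = θ_j. -/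

import Mathlib

lemma telescope {α : Type*} [LinearOrder α] (S : Finset α) (g : α → ℤ) :
    ∏ k ∈ S, (g k + 1) =
      1 + ∑ i ∈ S, (∏ k ∈ S.filter (fun k => k < i), (g k + 1)) * g i := by
  induction S using Finset.induction_on_max with
  | empty => simp
  | insert m S hlt ih =>
    have hm : m ∉ S := fun h => lt_irrefl m (hlt m h)
    rw [Finset.prod_insert hm, Finset.sum_insert hm]
    have h1 : (insert m S).filter (fun k => k < m) = S := by
      ext k
      simp only [Finset.mem_filter, Finset.mem_insert]
      constructor
      · rintro ⟨h | h, hk⟩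
        · exact absurd hk (by simp [h])
        · exact h
      · exact fun h => ⟨Or.inr h, hlt k h⟩
    have h2 : ∀ i ∈ S, (insert m S).filter (fun k => k < i) = S.filter (fun k => k < i) := by
      intro i hi
      ext k
      simp only [Finset.mem_filter, Finset.mem_insert]
      constructor
      · rintro ⟨h | h, hk⟩
        · exact absurd (hk.trans (hlt i hi)) (by simp [h])
        · exact ⟨h, hk⟩
      · exact fun ⟨h, hk⟩ => ⟨Or.inr h, hk⟩
    rw [h1, Finset.sum_congr rfl (fun i hi => by rw [h2 i hi]), ih]
    ring

lemma sum_split {n : ℕ} {M : Type*} [AddCommMonoid M] (m : Fin n) (f : Fin n → M) :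
    ∑ i, f i = ((∑ i ∈ Finset.Iio m, f i) + f m) + ∑ i ∈ Finset.Ioi m, f i := by
  classical
  rw [← Finset.sum_filter_add_sum_filter_not Finset.univ (fun i => i < m) f]
  have h1 : Finset.univ.filter (fun i => i < m) = Finset.Iio m := by ext k; simp
  have h2 : Finset.univ.filter (fun i => ¬ i < m) = insert m (Finset.Ioi m) := by
    ext k
    simp only [Finset.mem_filter, Finset.mem_univ, true_and, not_lt, Finset.mem_insert,
      Finset.mem_Ioi]
    constructor
    · intro h; rcases h.lt_or_eq with h' | h'
      · exact Or.inr h'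
      · exact Or.inl h'.symm
    · rintro (rfl | h); · exact le_refl _
      · exact h.le
  rw [h1, h2, Finset.sum_insert (by simp), add_assoc]

/-- if `c j > 0`, `c t > 0` for all `t ∈ I_j`, and (in case `j ∈ I`) the
leaf `ℓ_j` contains no optimal solution, then every optimal solution of
`max {c·x : x ∈ K}` satisfies the `j`-th packing inequality with equality. -/
theorem stmt_10 {n : ℕ} (hn : 1 ≤ n)
    (a u : Fin n → ℤ) (ha : ∀ i, 0 < a i) (hu : ∀ i, 1 ≤ u i)
    (b : ℤ) (hb : 0 < b)
    (hub : ∀ i, a i * u i ≤ b)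
    (hsi : ∀ i j : Fin n, (j : ℕ) = (i : ℕ) + 1 →
      ∑ k ∈ Finset.Iic i, a k * u k ≤ a j)
    (θ : Fin n → ℤ)
    (hθ : ∀ i : Fin n,
      θ i = min (u i) ((b - ∑ k ∈ Finset.Ioi i, a k * θ k).fdiv (a i)))
    (φ : Fin n → Fin n → ℤ)
    (hφ : ∀ j i : Fin n, φ j i =
      (u j - θ j) * ∏ k ∈ (Finset.Ioo j i).filter (fun k => 1 ≤ θ k), (u k + 1 - θ k))
    (c : Fin n → ℝ) (j : Fin n)
    (hcj : 0 < c j) (hct : ∀ t, j < t → 1 ≤ θ t → 0 < c t)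
    (hleaf : 1 ≤ θ j →
      ∀ x : Fin n → ℤ,
        -- x ∈ ℓ_j :
        ((∀ i, i < j → x i = 0 ∨ x i = u i) ∧ (x j = 0 ∨ x j = θ j - 1) ∧
          (∀ i, j < i → x i = θ i)) →
        -- x ∈ Opt(c) :
        (((∀ i, 0 ≤ x i ∧ x i ≤ u i) ∧ ∑ i, a i * x i ≤ b) ∧
          (∀ y : Fin n → ℤ, (∀ i, 0 ≤ y i ∧ y i ≤ u i) → ∑ i, a i * y i ≤ b →
            ∑ i, c i * (y i : ℝ) ≤ ∑ i, c i * (x i : ℝ))) →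
        False) :
    ∀ x : Fin n → ℤ, (∀ i, 0 ≤ x i ∧ x i ≤ u i) → ∑ i, a i * x i ≤ b →
      (∀ y : Fin n → ℤ, (∀ i, 0 ≤ y i ∧ y i ≤ u i) → ∑ i, a i * y i ≤ b →
        ∑ i, c i * (y i : ℝ) ≤ ∑ i, c i * (x i : ℝ)) →
      x j + ∑ i ∈ (Finset.Ioi j).filter (fun i => 1 ≤ θ i), φ j i * (x i - θ i)
        = θ j := by
  classical
  -- residual nonnegativity and greedy bounds
  have key : ∀ i : Fin n, 0 ≤ b - ∑ k ∈ Finset.Ioi i, a k * θ k →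
      a i * θ i ≤ b - ∑ k ∈ Finset.Ioi i, a k * θ k := by
    intro i hri
    rw [hθ i]
    have h1 : min (u i) ((b - ∑ k ∈ Finset.Ioi i, a k * θ k).fdiv (a i)) ≤
        (b - ∑ k ∈ Finset.Ioi i, a k * θ k).fdiv (a i) := min_le_right _ _
    have h2 : a i * ((b - ∑ k ∈ Finset.Ioi i, a k * θ k).fdiv (a i)) ≤
        b - ∑ k ∈ Finset.Ioi i, a k * θ k := by
      rw [Int.fdiv_eq_ediv_of_nonneg _ (ha i).le, mul_comm]
      exact (Int.le_ediv_iff_mul_le (ha i)).mp le_rfl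
    calc a i * min (u i) ((b - ∑ k ∈ Finset.Ioi i, a k * θ k).fdiv (a i))
        ≤ a i * ((b - ∑ k ∈ Finset.Ioi i, a k * θ k).fdiv (a i)) :=
          mul_le_mul_of_nonneg_left h1 (ha i).le
      _ ≤ _ := h2
  have hraux : ∀ s : ℕ, ∀ i : Fin n, n - (i : ℕ) ≤ s →
      0 ≤ b - ∑ k ∈ Finset.Ioi i, a k * θ k := by
    intro s
    induction s with
    | zero => intro i h; exact absurd h (by have := i.isLt; omega)
    | succ s ih =>
      intro i h
      by_cases htop : (i : ℕ) = n - 1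
      · have he : Finset.Ioi i = (∅ : Finset (Fin n)) := by
          ext k
          simp only [Finset.mem_Ioi, Finset.notMem_empty, iff_false, Fin.lt_def]
          have := k.isLt; omega
        rw [he]; simpa using hb.le
      · have hin := i.isLt
        set i' : Fin n := ⟨(i : ℕ) + 1, by omega⟩ with hi'def
        have hIoi : Finset.Ioi i = insert i' (Finset.Ioi i') := by
          ext k
          simp only [Finset.mem_Ioi, Finset.mem_insert, Fin.lt_def, Fin.ext_iff, hi'def]
          omega
        have hri' : 0 ≤ b - ∑ k ∈ Finset.Ioi i', a k * θ k := ih i' (by simp [hi'def]; omega)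
        have hkey := key i' hri'
        rw [hIoi, Finset.sum_insert (by simp)]
        linarith
  have hr : ∀ i : Fin n, 0 ≤ b - ∑ k ∈ Finset.Ioi i, a k * θ k :=
    fun i => hraux n i (by omega)
  have hθa : ∀ i : Fin n, a i * θ i ≤ b - ∑ k ∈ Finset.Ioi i, a k * θ k :=
    fun i => key i (hr i)
  have hθnn : ∀ i, 0 ≤ θ i := by
    intro i
    rw [hθ i]
    refine le_min (by linarith [hu i]) ?_
    rw [Int.fdiv_eq_ediv_of_nonneg _ (ha i).le]
    exact Int.ediv_nonneg (hr i) (ha i).le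
  have hθu : ∀ i, θ i ≤ u i := fun i => by rw [hθ i]; exact min_le_left _ _
  -- superincreasing bound on lower part
  have F1 : ∀ (i : Fin n) (x : Fin n → ℤ), (∀ k, 0 ≤ x k ∧ x k ≤ u k) →
      ∑ k ∈ Finset.Iio i, a k * x k ≤ a i := by
    intro i x hx
    have h1 : ∑ k ∈ Finset.Iio i, a k * x k ≤ ∑ k ∈ Finset.Iio i, a k * u k :=
      Finset.sum_le_sum fun k _ => mul_le_mul_of_nonneg_left (hx k).2 (ha k).le
    by_cases h0 : (i : ℕ) = 0
    · have he : Finset.Iio i = (∅ : Finset (Fin n)) := by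
        ext k
        simp only [Finset.mem_Iio, Finset.notMem_empty, iff_false, Fin.lt_def]
        omega
      rw [he]; simpa using (ha i).le
    · have hin := i.isLt
      set p : Fin n := ⟨(i : ℕ) - 1, by omega⟩ with hpdef
      have h2 := hsi p i (by simp [hpdef]; omega)
      have he : Finset.Iio i = Finset.Iic p := by
        ext k
        simp only [Finset.mem_Iio, Finset.mem_Iic, Fin.lt_def, Fin.le_def, hpdef]
        omega
      rw [he]; rw [he] at h1
      exact h1.trans h2
  -- feasibility lemma
  have FEAS : ∀ (y : Fin n → ℤ) (m : Fin n), (∀ k, 0 ≤ y k ∧ y k ≤ u k) →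
      (∀ k, m < k → y k = θ k) → y m + 1 ≤ θ m → ∑ i, a i * y i ≤ b := by
    intro y m hy hyθ hym
    rw [sum_split m]
    have h1 : ∑ i ∈ Finset.Iio m, a i * y i ≤ a m := F1 m y hy
    have h2 : ∑ i ∈ Finset.Ioi m, a i * y i = ∑ i ∈ Finset.Ioi m, a i * θ i :=
      Finset.sum_congr rfl fun k hk => by rw [hyθ k (Finset.mem_Ioi.mp hk)]
    have h3 := hθa m
    have h4 := mul_le_mul_of_nonneg_left hym (ha m).le
    rw [mul_add, mul_one] at h4
    rw [h2]
    linarith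
  -- upper bound on the topmost differing coordinate
  have KLE : ∀ (y : Fin n → ℤ) (m : Fin n), (∀ k, 0 ≤ y k ∧ y k ≤ u k) →
      (∑ i, a i * y i ≤ b) → (∀ k, m < k → y k = θ k) → y m ≤ θ m := by
    intro y m hy hyb hyθ
    rw [sum_split m] at hyb
    have h2 : ∑ i ∈ Finset.Ioi m, a i * y i = ∑ i ∈ Finset.Ioi m, a i * θ i :=
      Finset.sum_congr rfl fun k hk => by rw [hyθ k (Finset.mem_Ioi.mp hk)]
    have h1 : 0 ≤ ∑ i ∈ Finset.Iio m, a i * y i :=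
      Finset.sum_nonneg fun k _ => mul_nonneg (ha k).le (hy k).1
    rw [h2] at hyb
    have hram : a m * y m ≤ b - ∑ i ∈ Finset.Ioi m, a i * θ i := by linarith
    rw [hθ m]
    refine le_min (hy m).2 ?_
    rw [Int.fdiv_eq_ediv_of_nonneg _ (ha m).le]
    refine (Int.le_ediv_iff_mul_le (ha m)).mpr ?_
    rw [mul_comm]; exact hram
  -- objective of a single-coordinate update
  have OBJ : ∀ (y : Fin n → ℤ) (i : Fin n) (v : ℤ),
      ∑ k, c k * ((Function.update y i v) k : ℝ) =
        ∑ k, c k * (y k : ℝ) + c i * ((v : ℝ) - (y i : ℝ)) := by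
    intro y i v
    have heq : ∀ k : Fin n, c k * ((Function.update y i v) k : ℝ) =
        c k * (y k : ℝ) + (if k = i then c i * ((v : ℝ) - (y i : ℝ)) else 0) := by
      intro k
      by_cases hk : k = i
      · subst hk; rw [Function.update_self]; simp; ring
      · rw [Function.update_of_ne hk]; simp [hk]
    rw [Finset.sum_congr rfl fun k _ => heq k, Finset.sum_add_distrib,
      Finset.sum_ite_eq' Finset.univ i (fun _ => c i * ((v : ℝ) - (y i : ℝ)))]
    simp
  intro x hx hxb hopt
  by_cases hdiff : ∃ i, j < i ∧ x i ≠ θ i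
  · -- there is a coordinate above j differing from θ
    set S : Finset (Fin n) := Finset.univ.filter (fun i => j < i ∧ x i ≠ θ i) with hSdef
    have hSne : S.Nonempty := by
      obtain ⟨i, hji, hxi⟩ := hdiff
      exact ⟨i, by simp [hSdef, hji, hxi]⟩
    set m : Fin n := S.max' hSne with hmdef
    have hjm : j < m ∧ x m ≠ θ m := by
      have := S.max'_mem hSne
      simpa [hSdef] using this
    have hmθ : ∀ k, m < k → x k = θ k := by
      intro k hk
      by_contra hne
      have hjk : j < k := lt_trans hjm.1 hk
      have : k ≤ m := S.le_max' k (by simp [hSdef, hjk, hne])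
      exact absurd hk (not_lt.mpr this)
    have hxm_le : x m ≤ θ m := KLE x m hx hxb hmθ
    have hxm_lt : x m < θ m := lt_of_le_of_ne hxm_le hjm.2
    have hθm1 : 1 ≤ θ m := by linarith [(hx m).1]
    have hcm : 0 < c m := hct m hjm.1 hθm1
    -- x m = θ m - 1
    have hxm1 : x m = θ m - 1 := by
      by_contra hne
      have h2 : x m + 2 ≤ θ m := by omega
      set y := Function.update x m (x m + 1) with hydef
      have hy : ∀ k, 0 ≤ y k ∧ y k ≤ u k := by
        intro k
        rcases eq_or_ne k m with hk | hk
        · rw [hydef, hk, Function.update_self]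
          exact ⟨by linarith [(hx m).1], by linarith [hθu m]⟩
        · rw [hydef, Function.update_of_ne hk]; exact hx k
      have hyb : ∑ i, a i * y i ≤ b := by
        refine FEAS y m hy (fun k hk => ?_) ?_
        · rw [hydef, Function.update_of_ne (ne_of_gt hk)]; exact hmθ k hk
        · rw [hydef, Function.update_self]; omega
      have hle := hopt y hy hyb
      rw [hydef, OBJ] at hle
      have hpos : (0 : ℝ) < c m * (((x m + 1 : ℤ) : ℝ) - (x m : ℝ)) := by
        refine mul_pos hcm ?_
        push_cast; linarith
      linarith
    -- every coordinate below m with positive cost is at its upper bound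
    have CU : ∀ i : Fin n, i < m → 0 < c i → x i = u i := by
      intro i him hci
      by_contra hne
      have hlt : x i < u i := lt_of_le_of_ne (hx i).2 hne
      set y := Function.update x i (u i) with hydef
      have hy : ∀ k, 0 ≤ y k ∧ y k ≤ u k := by
        intro k
        rcases eq_or_ne k i with hk | hk
        · rw [hydef, hk, Function.update_self]
          exact ⟨by linarith [hu i], le_rfl⟩
        · rw [hydef, Function.update_of_ne hk]; exact hx k
      have hyb : ∑ i, a i * y i ≤ b := by
        refine FEAS y m hy (fun k hk => ?_) ?_
        · rw [hydef, Function.update_of_ne (ne_of_gt (lt_trans him hk))]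
          exact hmθ k hk
        · rw [hydef, Function.update_of_ne (ne_of_gt him)]; omega
      have hle := hopt y hy hyb
      rw [hydef, OBJ] at hle
      have hpos : (0 : ℝ) < c i * ((u i : ℝ) - (x i : ℝ)) := by
        refine mul_pos hci ?_
        have : (x i : ℝ) < (u i : ℝ) := by exact_mod_cast hlt
        linarith
      linarith
    have hxj : x j = u j := CU j hjm.1 hcj
    -- now the sum computation
    set F : Finset (Fin n) := (Finset.Ioi j).filter (fun i => 1 ≤ θ i) with hFdef
    have hmF : m ∈ F := by simp [hFdef, hjm.1, hθm1]
    set Sm : Finset (Fin n) := F.filter (fun i => i < m) with hSmdef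
    have hsplitF : ∑ i ∈ F, φ j i * (x i - θ i) =
        (∑ i ∈ Sm, φ j i * (x i - θ i)) +
          ∑ i ∈ F.filter (fun i => ¬ i < m), φ j i * (x i - θ i) :=
      (Finset.sum_filter_add_sum_filter_not F (fun i => i < m) _).symm
    have hFnot : F.filter (fun i => ¬ i < m) = insert m (F.filter (fun i => m < i)) := by
      ext k
      simp only [Finset.mem_filter, not_lt, Finset.mem_insert]
      constructor
      · rintro ⟨hkF, hmk⟩
        rcases hmk.lt_or_eq with h | h
        · exact Or.inr ⟨hkF, h⟩
        · exact Or.inl h.symm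
      · rintro (rfl | ⟨hkF, h⟩)
        · exact ⟨hmF, le_rfl⟩
        · exact ⟨hkF, h.le⟩
    have hgt0 : ∑ i ∈ F.filter (fun i => m < i), φ j i * (x i - θ i) = 0 :=
      Finset.sum_eq_zero fun k hk => by
        rw [hmθ k (Finset.mem_filter.mp hk).2]; ring
    -- telescoping
    set g : Fin n → ℤ := fun k => u k - θ k with hgdef
    have hSm_eq : (Finset.Ioo j m).filter (fun k => 1 ≤ θ k) = Sm := by
      ext k
      simp only [hSmdef, hFdef, Finset.mem_filter, Finset.mem_Ioo, Finset.mem_Ioi]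
      constructor
      · rintro ⟨⟨h1, h2⟩, h3⟩; exact ⟨⟨h1, h3⟩, h2⟩
      · rintro ⟨⟨h1, h3⟩, h2⟩; exact ⟨⟨h1, h2⟩, h3⟩
    have hφSm : ∀ i ∈ Sm, φ j i =
        (u j - θ j) * ∏ k ∈ Sm.filter (fun k => k < i), (g k + 1) := by
      intro i hi
      have him : i < m := (Finset.mem_filter.mp hi).2
      rw [hφ j i]
      have hset : (Finset.Ioo j i).filter (fun k => 1 ≤ θ k) =
          Sm.filter (fun k => k < i) := by
        ext k
        simp only [hSmdef, hFdef, Finset.mem_filter, Finset.mem_Ioo, Finset.mem_Ioi]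
        constructor
        · rintro ⟨⟨h1, h2⟩, h3⟩; exact ⟨⟨⟨h1, h3⟩, h2.trans him⟩, h2⟩
        · rintro ⟨⟨⟨h1, h3⟩, _⟩, h2⟩; exact ⟨⟨h1, h2⟩, h3⟩
      rw [hset]
      congr 1
      exact Finset.prod_congr rfl fun k _ => by simp only [hgdef]; ring
    have hφm : φ j m = (u j - θ j) * ∏ k ∈ Sm, (g k + 1) := by
      rw [hφ j m, hSm_eq]
      congr 1
      exact Finset.prod_congr rfl fun k _ => by simp [hgdef]; ring
    have htel := telescope Sm g
    have hsumSm : ∑ i ∈ Sm, φ j i * (x i - θ i) = φ j m - (u j - θ j) := by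
      have hx_u : ∀ i ∈ Sm, x i - θ i = g i := by
        intro i hi
        have him : i < m := (Finset.mem_filter.mp hi).2
        have hiF : i ∈ F := (Finset.mem_filter.mp hi).1
        have hθi : 1 ≤ θ i := (Finset.mem_filter.mp hiF).2
        have hji : j < i := Finset.mem_Ioi.mp (Finset.mem_filter.mp hiF).1
        rw [hgdef, CU i him (hct i hji hθi)]
      calc ∑ i ∈ Sm, φ j i * (x i - θ i)
          = ∑ i ∈ Sm, ((u j - θ j) * ∏ k ∈ Sm.filter (fun k => k < i), (g k + 1)) * g i :=
            Finset.sum_congr rfl fun i hi => by rw [hφSm i hi, hx_u i hi]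
        _ = (u j - θ j) * ∑ i ∈ Sm, (∏ k ∈ Sm.filter (fun k => k < i), (g k + 1)) * g i := by
            rw [Finset.mul_sum]; exact Finset.sum_congr rfl fun i _ => by ring
        _ = (u j - θ j) * (∏ k ∈ Sm, (g k + 1) - 1) := by rw [htel]; ring
        _ = φ j m - (u j - θ j) := by rw [hφm]; ring
    rw [hsplitF, hFnot, Finset.sum_insert (by simp), hgt0, hsumSm, hxm1, hxj]
    ring
  · -- all coordinates above j agree with θ
    push_neg at hdiff
    have hjθ : ∀ k, j < k → x k = θ k := hdiff
    have hxj_le : x j ≤ θ j := KLE x j hx hxb hjθ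
    have hzero : ∑ i ∈ (Finset.Ioi j).filter (fun i => 1 ≤ θ i), φ j i * (x i - θ i) = 0 :=
      Finset.sum_eq_zero fun k hk => by
        have : j < k := Finset.mem_Ioi.mp (Finset.mem_filter.mp hk).1
        rw [hjθ k this]; ring
    rw [hzero, add_zero]
    rcases eq_or_lt_of_le hxj_le with heq | hlt
    · exact heq
    · exfalso
      by_cases h2 : x j + 2 ≤ θ j
      · -- increment x j
        set y := Function.update x j (x j + 1) with hydef
        have hy : ∀ k, 0 ≤ y k ∧ y k ≤ u k := by
          intro k
          rcases eq_or_ne k j with hk | hk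
          · rw [hydef, hk, Function.update_self]
            exact ⟨by linarith [(hx j).1], by linarith [hθu j]⟩
          · rw [hydef, Function.update_of_ne hk]; exact hx k
        have hyb : ∑ i, a i * y i ≤ b := by
          refine FEAS y j hy (fun k hk => ?_) ?_
          · rw [hydef, Function.update_of_ne (ne_of_gt hk)]; exact hjθ k hk
          · rw [hydef, Function.update_self]; omega
        have hle := hopt y hy hyb
        rw [hydef, OBJ] at hle
        have hpos : (0 : ℝ) < c j * (((x j + 1 : ℤ) : ℝ) - (x j : ℝ)) := by
          refine mul_pos hcj ?_
          push_cast; linarith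
        linarith
      · -- x j = θ j - 1 : build a leaf point
        have hxj1 : x j = θ j - 1 := by omega
        have hθj1 : 1 ≤ θ j := by linarith [(hx j).1]
        set x' : Fin n → ℤ :=
          fun k => if k < j then (if 0 ≤ c k then u k else 0) else x k with hx'def
        have hx'rect : ∀ k, 0 ≤ x' k ∧ x' k ≤ u k := by
          intro k
          simp only [hx'def]
          split_ifs with h1 h2
          · exact ⟨by linarith [hu k], le_rfl⟩
          · exact ⟨le_rfl, by linarith [hu k]⟩
          · exact hx k
        have hx'j : x' j = x j := by simp [hx'def]
        have hx'gt : ∀ k, j < k → x' k = θ k := by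
          intro k hk
          simp only [hx'def, if_neg (not_lt.mpr hk.le)]
          exact hjθ k hk
        have hx'b : ∑ i, a i * x' i ≤ b := by
          refine FEAS x' j hx'rect hx'gt ?_
          rw [hx'j]; omega
        have hxx' : ∑ i, c i * (x i : ℝ) ≤ ∑ i, c i * (x' i : ℝ) := by
          refine Finset.sum_le_sum fun k _ => ?_
          simp only [hx'def]
          split_ifs with h1 h2
          · refine mul_le_mul_of_nonneg_left ?_ h2
            exact_mod_cast (hx k).2
          · push_neg at h2
            have hxk : (0 : ℝ) ≤ (x k : ℝ) := by exact_mod_cast (hx k).1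
            have : c k * (x k : ℝ) ≤ 0 := mul_nonpos_of_nonpos_of_nonneg h2.le hxk
            simpa using this
          · exact le_refl _
        exact hleaf hθj1 x'
          ⟨fun i hi => by
              simp only [hx'def, if_pos hi]
              split_ifs with h
              · exact Or.inr rfl
              · exact Or.inl rfl,
            Or.inr (by rw [hx'j, hxj1]),
            hx'gt⟩
          ⟨⟨hx'rect, hx'b⟩,
            fun y hy hyb => (hopt y hy hyb).trans hxx'⟩
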